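/- In the BICA duopoly (quality q1 > q2) with MHR willingness-to-pay distribution F having density f > 0 on (0, v̄), there is a unique non-trivial local Nash equilibrium (p1*, p2*) with p1* > p2* > 0: p1* is the unique solution of F̄(p) = p f(p) and p2* is the unique solution of F̄(p) - F̄(p1*) = p f(p) on (0, p1*). -/

import Mathlib

/-- Seller 1 (higher quality) revenue in the BICA duopoly: all customers affording
`p1` buy from seller 1. -/
noncomputable def R1 (F : ℝ → ℝ) (p1 p2 : ℝ) : ℝ := p1 * (1 - F p1)

/-- Seller 2 (lower quality) revenue: customers with `p2 ≤ w < p1` buy from seller 2. -/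
noncomputable def R2 (F : ℝ → ℝ) (p1 p2 : ℝ) : ℝ := p2 * max (F p1 - F p2) 0

/-- `(p1, p2)` is a non-trivial local Nash equilibrium: prices in `[0, v̄]`, each a
local maximum of own revenue given the other price, and every seller with a positive
price earns strictly positive revenue. -/
def NTLNE (vbar : ℝ) (F : ℝ → ℝ) (p1 p2 : ℝ) : Prop :=
  p1 ∈ Set.Icc (0 : ℝ) vbar ∧ p2 ∈ Set.Icc (0 : ℝ) vbar ∧
  IsLocalMaxOn (fun q => R1 F q p2) (Set.Icc (0 : ℝ) vbar) p1 ∧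
  IsLocalMaxOn (fun q => R2 F p1 q) (Set.Icc (0 : ℝ) vbar) p2 ∧
  (0 < p1 → 0 < R1 F p1 p2) ∧ (0 < p2 → 0 < R2 F p1 p2)

set_option maxHeartbeats 1000000

private lemma maxOn_helper {g : ℝ → ℝ} {a m b : ℝ} (ham : a ≤ m) (hmb : m ≤ b)
    (h1 : MonotoneOn g (Set.Icc a m)) (h2 : AntitoneOn g (Set.Icc m b)) :
    IsMaxOn g (Set.Icc a b) m := by
  apply isMaxOn_iff.mpr
  intro x hx
  rcases le_total x m with h | h
  · exact h1 ⟨hx.1, h⟩ ⟨ham, le_rfl⟩ h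
  · exact h2 ⟨le_rfl, hmb⟩ ⟨h, hx.2⟩ h

/-- In the BICA duopoly (quality `q1 > q2`) with an MHR willingness-to-pay
distribution `F` with positive continuous density `f` on `(0, v̄)`, there is a unique
non-trivial local Nash equilibrium `(p1*, p2*)`, and it satisfies `p1* > p2* > 0`,
with `p1*` the unique solution of `F̄(p) = p f(p)` on `(0, v̄)` and `p2*` the unique
solution of `F̄(p) - F̄(p1*) = p f(p)` on `(0, p1*)`. -/
theorem stmt17 (vbar : ℝ) (hvbar : 0 < vbar) (F f : ℝ → ℝ)
    (hF0 : F 0 = 0) (hFv : F vbar = 1) (hFmono : Monotone F)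
    (hFcont : Continuous F)
    (hFderiv : ∀ p ∈ Set.Ioo (0 : ℝ) vbar, HasDerivAt F (f p) p)
    (hf_cont : ContinuousOn f (Set.Ioo (0 : ℝ) vbar))
    (hf_pos : ∀ p ∈ Set.Ioo (0 : ℝ) vbar, 0 < f p)
    (hMHR : MonotoneOn (fun p => f p / (1 - F p)) (Set.Ioo (0 : ℝ) vbar)) :
    ∃ p1 p2 : ℝ, NTLNE vbar F p1 p2 ∧
      0 < p2 ∧ p2 < p1 ∧
      (∀ x ∈ Set.Ioo (0 : ℝ) vbar, (1 - F x = x * f x ↔ x = p1)) ∧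
      (∀ x ∈ Set.Ioo (0 : ℝ) p1, ((1 - F x) - (1 - F p1) = x * f x ↔ x = p2)) ∧
      (∀ q1 q2 : ℝ, NTLNE vbar F q1 q2 → q1 = p1 ∧ q2 = p2) := by
  have hIoo : Set.Ioo (0:ℝ) vbar ⊆ Set.Icc 0 vbar := Set.Ioo_subset_Icc_self
  have hFstrict : StrictMonoOn F (Set.Icc 0 vbar) := by
    apply strictMonoOn_of_deriv_pos (convex_Icc 0 vbar) hFcont.continuousOn
    intro x hx
    rw [interior_Icc] at hx
    rw [(hFderiv x hx).deriv]
    exact hf_pos x hx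
  have hd : ∀ x ∈ Set.Ioo (0:ℝ) vbar, 0 < 1 - F x := by
    intro x hx
    have : F x < F vbar := hFstrict ⟨hx.1.le, hx.2.le⟩ ⟨hvbar.le, le_rfl⟩ hx.2
    rw [hFv] at this; linarith
  have hF_nonneg : ∀ x, 0 ≤ x → 0 ≤ F x := fun x hx => by
    have := hFmono hx; rwa [hF0] at this
  have hh_pos : ∀ x ∈ Set.Ioo (0:ℝ) vbar, 0 < f x / (1 - F x) := fun x hx =>
    div_pos (hf_pos x hx) (hd x hx)
  -- the function x ↦ x * hazard(x)
  have hφmono : StrictMonoOn (fun x => x * (f x / (1 - F x))) (Set.Ioo 0 vbar) := by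
    intro x hx y hy hxy
    have h1 : f x / (1 - F x) ≤ f y / (1 - F y) := hMHR hx hy hxy.le
    have h2 : 0 < f x / (1 - F x) := hh_pos x hx
    calc x * (f x / (1 - F x)) < y * (f x / (1 - F x)) := mul_lt_mul_of_pos_right hxy h2
      _ ≤ y * (f y / (1 - F y)) := mul_le_mul_of_nonneg_left h1 hy.1.le
  have hφcont : ContinuousOn (fun x => x * (f x / (1 - F x))) (Set.Ioo 0 vbar) :=
    continuousOn_id.mul (hf_cont.div (continuous_const.sub hFcont).continuousOn
      (fun x hx => (hd x hx).ne'))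
  -- derivative of q ↦ q * (c - F q)
  have hu_deriv : ∀ c : ℝ, ∀ x ∈ Set.Ioo (0:ℝ) vbar,
      HasDerivAt (fun q => q * (c - F q)) ((c - F x) - x * f x) x := by
    intro c x hx
    have h : HasDerivAt (fun q => q * (c - F q)) (1 * (c - F x) + x * (0 - f x)) x := by
      exact (hasDerivAt_id' x).mul ((hasDerivAt_const x c).sub (hFderiv x hx))
    convert h using 1
    ring
  have hcont_u : ∀ c : ℝ, Continuous (fun q : ℝ => q * (c - F q)) :=
    fun c => continuous_id.mul (continuous_const.sub hFcont)
  -- existence of b with 1 ≤ φ b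
  have hexb : ∃ b ∈ Set.Ioo (0:ℝ) vbar, 1 ≤ b * (f b / (1 - F b)) := by
    by_contra hcon
    push_neg at hcon
    have hmono : StrictMonoOn (fun q => q * (1 - F q)) (Set.Icc 0 vbar) := by
      apply strictMonoOn_of_deriv_pos (convex_Icc 0 vbar) (hcont_u 1).continuousOn
      intro x hx
      rw [interior_Icc] at hx
      rw [(hu_deriv 1 x hx).deriv]
      have h1 : x * (f x / (1 - F x)) < 1 := hcon x hx
      have h2 := hd x hx
      rw [← mul_div_assoc, div_lt_one h2] at h1
      linarith
    have h2 : (0:ℝ) * (1 - F 0) < vbar * (1 - F vbar) :=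
      hmono ⟨le_rfl, hvbar.le⟩ ⟨hvbar.le, le_rfl⟩ hvbar
    rw [hF0, hFv] at h2
    norm_num at h2
  obtain ⟨b, hb, hb1⟩ := hexb
  have hfb := hf_pos b hb
  have hdb := hd b hb
  set a : ℝ := min (b/2) ((1 - F b) / (2 * f b)) with hadef
  have ha_pos : 0 < a := lt_min (by linarith [hb.1]) (div_pos hdb (by linarith))
  have hab : a < b := lt_of_le_of_lt (min_le_left _ _) (by linarith [hb.1])
  have haI : a ∈ Set.Ioo (0:ℝ) vbar := ⟨ha_pos, hab.trans hb.2⟩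
  have hφa : a * (f a / (1 - F a)) < 1 := by
    have h1 : f a / (1 - F a) ≤ f b / (1 - F b) := hMHR haI hb hab.le
    have h3 : a * (f a / (1 - F a)) ≤ a * (f b / (1 - F b)) :=
      mul_le_mul_of_nonneg_left h1 ha_pos.le
    have h4 : a * (f b / (1 - F b)) ≤ ((1 - F b) / (2 * f b)) * (f b / (1 - F b)) :=
      mul_le_mul_of_nonneg_right (min_le_right _ _) (hh_pos b hb).le
    have h5 : ((1 - F b) / (2 * f b)) * (f b / (1 - F b)) = 1/2 := by
      field_simp
    linarith
  -- IVT for p1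
  have hsub1 : Set.Icc a b ⊆ Set.Ioo 0 vbar := fun x hx =>
    ⟨lt_of_lt_of_le ha_pos hx.1, lt_of_le_of_lt hx.2 hb.2⟩
  obtain ⟨p1, hp1ab, hp1φ⟩ := intermediate_value_Icc hab.le (hφcont.mono hsub1)
    (Set.mem_Icc.mpr ⟨hφa.le, hb1⟩)
  have hp1I : p1 ∈ Set.Ioo (0:ℝ) vbar := hsub1 hp1ab
  simp only at hp1φ
  have hdp1 := hd p1 hp1I
  have hp1eq : 1 - F p1 = p1 * f p1 := by
    rw [← mul_div_assoc] at hp1φ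
    field_simp at hp1φ
    linarith
  -- characterization of p1
  have hiff1 : ∀ x ∈ Set.Ioo (0:ℝ) vbar, (1 - F x = x * f x ↔ x = p1) := by
    intro x hx
    constructor
    · intro h
      apply hφmono.injOn hx hp1I
      simp only
      rw [← mul_div_assoc, hp1φ, div_eq_one_iff_eq (hd x hx).ne']
      linarith
    · rintro rfl; linarith
  have hD1pos : ∀ x ∈ Set.Ioo (0:ℝ) vbar, x < p1 → 0 < (1 - F x) - x * f x := by
    intro x hx hxp
    have h1 : x * (f x / (1 - F x)) < 1 := by
      have := hφmono hx hp1I hxp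
      simp only at this
      linarith [hp1φ]
    rw [← mul_div_assoc, div_lt_one (hd x hx)] at h1
    linarith
  have hD1neg : ∀ x ∈ Set.Ioo (0:ℝ) vbar, p1 < x → (1 - F x) - x * f x < 0 := by
    intro x hx hxp
    have h1 : 1 < x * (f x / (1 - F x)) := by
      have := hφmono hp1I hx hxp
      simp only at this
      linarith [hp1φ]
    rw [← mul_div_assoc, one_lt_div (hd x hx)] at h1
    linarith
  -- the function B for seller 2
  have hc_pos : 0 < F p1 := by
    have : F 0 < F p1 := hFstrict ⟨le_rfl, hvbar.le⟩ (hIoo hp1I) hp1I.1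
    rwa [hF0] at this
  set B : ℝ → ℝ := fun x => ((F p1 - F x) - x * f x) / (1 - F x) with hBdef
  have hBalt : ∀ x ∈ Set.Ioo (0:ℝ) vbar, B x =
      1 - (1 - F p1) / (1 - F x) - x * (f x / (1 - F x)) := by
    intro x hx
    have h2 := (hd x hx).ne'
    rw [hBdef]
    field_simp
    ring
  have hBanti : StrictAntiOn B (Set.Ioo 0 vbar) := by
    intro x hx y hy hxy
    rw [hBalt x hx, hBalt y hy]
    have hφ := hφmono hx hy hxy
    simp only at hφ
    have hdx := hd x hx
    have hdy := hd y hy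
    have hFxy : F x < F y := hFstrict (hIoo hx) (hIoo hy) hxy
    have hdiv : (1 - F p1) / (1 - F x) < (1 - F p1) / (1 - F y) :=
      div_lt_div_of_pos_left hdp1 hdy (by linarith)
    linarith
  have hBcont : ContinuousOn B (Set.Ioo 0 vbar) := by
    apply ContinuousOn.div
    · exact ((continuous_const.sub hFcont).continuousOn.sub
        (continuousOn_id.mul hf_cont))
    · exact (continuous_const.sub hFcont).continuousOn
    · exact fun x hx => (hd x hx).ne'
  have hBp1 : B p1 = -1 := by
    rw [hBdef]
    have h2 := hdp1.ne'
    field_simp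
    linarith
  -- small a2 with B a2 > 0
  obtain ⟨δ, hδpos, hδ⟩ := Metric.continuousAt_iff.mp (hFcont.continuousAt (x := 0))
    (F p1 / 4) (by linarith)
  have h1p1 : f p1 / (1 - F p1) = 1 / p1 := by
    rw [hp1eq, mul_comm, div_mul_eq_div_div, div_self (hf_pos p1 hp1I).ne']
  set a2 : ℝ := min (δ/2) (min (p1/2) (F p1 * p1 / 4)) with ha2def
  have ha2pos : 0 < a2 := lt_min (by linarith)
    (lt_min (by linarith [hp1I.1]) (div_pos (mul_pos hc_pos hp1I.1) (by norm_num)))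
  have ha2p1 : a2 < p1 :=
    lt_of_le_of_lt ((min_le_right _ _).trans (min_le_left _ _)) (by linarith [hp1I.1])
  have ha2I : a2 ∈ Set.Ioo (0:ℝ) vbar := ⟨ha2pos, ha2p1.trans hp1I.2⟩
  have hFa2 : F a2 < F p1 / 4 := by
    have hdist : dist a2 0 < δ := by
      rw [Real.dist_eq, sub_zero, abs_of_pos ha2pos]
      linarith [min_le_left (δ/2) (min (p1/2) (F p1 * p1 / 4))]
    have := hδ hdist
    rw [Real.dist_eq, hF0, sub_zero] at this
    calc F a2 ≤ |F a2| := le_abs_self _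
      _ < F p1 / 4 := this
  have hha2 : a2 * (f a2 / (1 - F a2)) ≤ F p1 / 4 := by
    have e1 : a2 * (f a2 / (1 - F a2)) ≤ a2 * (1 / p1) := by
      rw [← h1p1]
      exact mul_le_mul_of_nonneg_left (hMHR ha2I hp1I ha2p1.le) ha2pos.le
    have e2 : a2 * (1 / p1) ≤ (F p1 * p1 / 4) * (1 / p1) :=
      mul_le_mul_of_nonneg_right ((min_le_right _ _).trans (min_le_right _ _))
        (one_div_nonneg.mpr hp1I.1.le)
    have e3 : (F p1 * p1 / 4) * (1 / p1) = F p1 / 4 := by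
      have h0 : p1 ≠ 0 := hp1I.1.ne'
      field_simp
    linarith
  have hBa2pos : 0 < B a2 := by
    have hda2 := hd a2 ha2I
    have hFa2nn := hF_nonneg a2 ha2pos.le
    have hnum : a2 * f a2 ≤ F p1 / 4 * (1 - F a2) := by
      have h := hha2
      rw [← mul_div_assoc, div_le_iff₀ hda2] at h
      exact h
    rw [hBdef]
    apply div_pos _ hda2
    nlinarith
  -- IVT for p2
  have hsub2 : Set.Icc a2 p1 ⊆ Set.Ioo 0 vbar := fun x hx =>
    ⟨lt_of_lt_of_le ha2pos hx.1, lt_of_le_of_lt hx.2 hp1I.2⟩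
  obtain ⟨p2, hp2ab, hp2B⟩ := intermediate_value_Icc' ha2p1.le (hBcont.mono hsub2)
    (Set.mem_Icc.mpr ⟨by rw [hBp1]; norm_num, hBa2pos.le⟩)
  have hp2I : p2 ∈ Set.Ioo (0:ℝ) vbar := hsub2 hp2ab
  have hp2lt : p2 < p1 := by
    rcases lt_or_eq_of_le hp2ab.2 with h | h
    · exact h
    · rw [h, hBp1] at hp2B; norm_num at hp2B
  have hp2pos : 0 < p2 := lt_of_lt_of_le ha2pos hp2ab.1
  have hdp2 := hd p2 hp2I
  have hp2eq : F p1 - F p2 = p2 * f p2 := by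
    have h := hp2B
    rw [hBdef] at h
    simp only at h
    rw [div_eq_zero_iff] at h
    rcases h with h | h
    · linarith
    · exfalso; exact hdp2.ne' h
  -- characterization of p2
  have hiff2 : ∀ x ∈ Set.Ioo (0:ℝ) p1, ((1 - F x) - (1 - F p1) = x * f x ↔ x = p2) := by
    intro x hx
    have hxI : x ∈ Set.Ioo (0:ℝ) vbar := ⟨hx.1, hx.2.trans hp1I.2⟩
    constructor
    · intro h
      apply hBanti.injOn hxI hp2I
      rw [hp2B, hBdef]
      simp only
      rw [div_eq_zero_iff]
      left; linarith
    · rintro rfl; linarith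
  have hD2sign : ∀ x ∈ Set.Ioo (0:ℝ) vbar,
      (F p1 - F x) - x * f x = B x * (1 - F x) := by
    intro x hx
    rw [hBdef]
    exact (div_mul_cancel₀ _ (hd x hx).ne').symm
  have hD2pos : ∀ x ∈ Set.Ioo (0:ℝ) vbar, x < p2 → 0 < (F p1 - F x) - x * f x := by
    intro x hx hxp
    rw [hD2sign x hx]
    have : 0 < B x := by
      have := hBanti hx hp2I hxp
      rw [hp2B] at this; linarith
    exact mul_pos this (hd x hx)
  have hD2neg : ∀ x ∈ Set.Ioo (0:ℝ) vbar, p2 < x → (F p1 - F x) - x * f x < 0 := by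
    intro x hx hxp
    rw [hD2sign x hx]
    have : B x < 0 := by
      have := hBanti hp2I hx hxp
      rw [hp2B] at this; linarith
    exact mul_neg_of_neg_of_pos this (hd x hx)
  -- value positivity
  have hFp2lt : F p2 < F p1 := hFstrict (hIoo hp2I) (hIoo hp1I) hp2lt
  have hval2 : p2 * max (F p1 - F p2) 0 = p2 * (F p1 - F p2) := by
    rw [max_eq_left (by linarith)]
  -- local max for seller 1
  have hmax1' : IsLocalMaxOn (fun q => q * (1 - F q)) (Set.Icc (0:ℝ) vbar) p1 := by
    apply IsMaxOn.localize
    apply maxOn_helper hp1I.1.le hp1I.2.le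
    · apply StrictMonoOn.monotoneOn
      apply strictMonoOn_of_deriv_pos (convex_Icc 0 p1) (hcont_u 1).continuousOn
      intro x hx
      rw [interior_Icc] at hx
      have hxI : x ∈ Set.Ioo (0:ℝ) vbar := ⟨hx.1, hx.2.trans hp1I.2⟩
      rw [(hu_deriv 1 x hxI).deriv]
      exact hD1pos x hxI hx.2
    · apply StrictAntiOn.antitoneOn
      apply strictAntiOn_of_deriv_neg (convex_Icc p1 vbar) (hcont_u 1).continuousOn
      intro x hx
      rw [interior_Icc] at hx
      have hxI : x ∈ Set.Ioo (0:ℝ) vbar := ⟨hp1I.1.trans hx.1, hx.2⟩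
      rw [(hu_deriv 1 x hxI).deriv]
      exact hD1neg x hxI hx.1
  -- local max for seller 2
  have hwmax : IsMaxOn (fun q => q * (F p1 - F q)) (Set.Icc 0 p1) p2 := by
    apply maxOn_helper hp2pos.le hp2lt.le
    · apply StrictMonoOn.monotoneOn
      apply strictMonoOn_of_deriv_pos (convex_Icc 0 p2) (hcont_u (F p1)).continuousOn
      intro x hx
      rw [interior_Icc] at hx
      have hxI : x ∈ Set.Ioo (0:ℝ) vbar := ⟨hx.1, (hx.2.trans hp2lt).trans hp1I.2⟩
      rw [(hu_deriv (F p1) x hxI).deriv]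
      exact hD2pos x hxI hx.2
    · apply StrictAntiOn.antitoneOn
      apply strictAntiOn_of_deriv_neg (convex_Icc p2 p1) (hcont_u (F p1)).continuousOn
      intro x hx
      rw [interior_Icc] at hx
      have hxI : x ∈ Set.Ioo (0:ℝ) vbar := ⟨hp2pos.trans hx.1, hx.2.trans hp1I.2⟩
      rw [(hu_deriv (F p1) x hxI).deriv]
      exact hD2neg x hxI hx.1
  have hmax2' : IsLocalMaxOn (fun q => q * max (F p1 - F q) 0)
      (Set.Icc (0:ℝ) vbar) p2 := by
    apply IsMaxOn.localize
    apply isMaxOn_iff.mpr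
    intro x hx
    rcases le_total x p1 with h | h
    · have hFx : F x ≤ F p1 := hFmono h
      rw [max_eq_left (by linarith), hval2]
      exact isMaxOn_iff.mp hwmax x ⟨hx.1, h⟩
    · have hFx : F p1 ≤ F x := hFmono h
      rw [max_eq_right (by linarith), hval2, mul_zero]
      nlinarith
  -- uniqueness
  have huniq : ∀ q1 q2 : ℝ, NTLNE vbar F q1 q2 → q1 = p1 ∧ q2 = p2 := by
    intro q1 q2 hq
    obtain ⟨hq1mem, hq2mem, hmax1, hmax2, hpos1, hpos2⟩ := hq
    simp only [R1, R2] at hmax1 hmax2 hpos1 hpos2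
    have hq1pos : 0 < q1 := by
      rcases lt_or_eq_of_le hq1mem.1 with h | h
      · exact h
      exfalso
      subst h
      have hne : (nhdsWithin (0:ℝ) (Set.Ioo (0:ℝ) vbar)).NeBot := by
        apply mem_closure_iff_nhdsWithin_neBot.mp
        rw [closure_Ioo hvbar.ne]
        exact ⟨le_rfl, hvbar.le⟩
      have hev := hmax1.filter_mono (nhdsWithin_mono (0:ℝ) hIoo)
      obtain ⟨x, hfx, hxI⟩ := (hev.and eventually_mem_nhdsWithin).exists
      simp only at hfx
      have := hd x hxI
      nlinarith [hxI.1]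
    have hdq1 : 0 < 1 - F q1 := by
      have h1 := hpos1 hq1pos
      by_contra hcon
      push_neg at hcon
      nlinarith
    have hq1v : q1 < vbar := lt_of_le_of_ne hq1mem.2
      (fun he => by rw [he, hFv] at hdq1; linarith)
    have hq1I : q1 ∈ Set.Ioo (0:ℝ) vbar := ⟨hq1pos, hq1v⟩
    have hloc : IsLocalMax (fun q => q * (1 - F q)) q1 :=
      hmax1.isLocalMax (Icc_mem_nhds hq1I.1 hq1I.2)
    have hz : (1 - F q1) - q1 * f q1 = 0 :=
      hloc.hasDerivAt_eq_zero (by simpa using hu_deriv 1 q1 hq1I)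
    have hq1p1 : q1 = p1 := (hiff1 q1 hq1I).mp (by linarith)
    subst hq1p1
    refine ⟨rfl, ?_⟩
    have hq2pos : 0 < q2 := by
      rcases lt_or_eq_of_le hq2mem.1 with h | h
      · exact h
      exfalso
      subst h
      have hne : (nhdsWithin (0:ℝ) (Set.Ioo (0:ℝ) q1)).NeBot := by
        apply mem_closure_iff_nhdsWithin_neBot.mp
        rw [closure_Ioo hq1I.1.ne]
        exact ⟨le_rfl, hq1I.1.le⟩
      have hsub : Set.Ioo (0:ℝ) q1 ⊆ Set.Icc 0 vbar := fun x hx =>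
        ⟨hx.1.le, (hx.2.trans hq1I.2).le⟩
      have hev := hmax2.filter_mono (nhdsWithin_mono (0:ℝ) hsub)
      obtain ⟨x, hfx, hxI⟩ := (hev.and eventually_mem_nhdsWithin).exists
      simp only at hfx
      have hFxlt : F x < F q1 := hFstrict (hsub hxI) (hIoo hq1I) hxI.2
      have h1 : x * (F q1 - F x) ≤ x * max (F q1 - F x) 0 :=
        mul_le_mul_of_nonneg_left (le_max_left _ _) hxI.1.le
      nlinarith [hxI.1]
    have h2pos := hpos2 hq2pos
    have hFq2 : F q2 < F q1 := by
      by_contra hcon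
      push_neg at hcon
      rw [max_eq_right (by linarith)] at h2pos
      simp at h2pos
    have hq2lt : q2 < q1 := by
      by_contra hcon
      push_neg at hcon
      exact absurd (hFmono hcon) (not_le.mpr hFq2)
    have hq2I : q2 ∈ Set.Ioo (0:ℝ) vbar := ⟨hq2pos, hq2lt.trans hq1I.2⟩
    have hloc2 : IsLocalMax (fun q => q * max (F q1 - F q) 0) q2 :=
      hmax2.isLocalMax (Icc_mem_nhds hq2I.1 hq2I.2)
    have hs : {q : ℝ | F q < F q1} ∈ nhds q2 :=
      (isOpen_lt hFcont continuous_const).mem_nhds hFq2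
    have hEq : (fun q => q * max (F q1 - F q) 0) =ᶠ[nhds q2]
        (fun q => q * (F q1 - F q)) := by
      filter_upwards [hs] with q hq
      rw [max_eq_left (by have h' : F q < F q1 := hq; linarith)]
    have hder : HasDerivAt (fun q => q * max (F q1 - F q) 0)
        ((F q1 - F q2) - q2 * f q2) q2 :=
      (hu_deriv (F q1) q2 hq2I).congr_of_eventuallyEq hEq
    have hz2 : (F q1 - F q2) - q2 * f q2 = 0 := hloc2.hasDerivAt_eq_zero hder
    exact (hiff2 q2 ⟨hq2pos, hq2lt⟩).mp (by linarith)
  refine ⟨p1, p2, ⟨⟨hp1I.1.le, hp1I.2.le⟩, ⟨hp2I.1.le, hp2I.2.le⟩, ?_, ?_, ?_, ?_⟩,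
    hp2pos, hp2lt, hiff1, hiff2, huniq⟩
  · simpa only [R1] using hmax1'
  · simpa only [R2] using hmax2'
  · intro _
    simp only [R1]
    exact mul_pos hp1I.1 hdp1
  · intro _
    simp only [R2]
    rw [hval2]
    exact mul_pos hp2pos (by linarith)
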